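/- Every weak Følner sequence (F_n) in a locally compact second countable group admits a tempered subsequence: there is a subsequence (F_{n_k}) and a constant C such that |⋃_{i<k} F_{n_i}⁻¹ F_{n_k}| < C|F_{n_k}| for every k. -/

import Mathlib

open MeasureTheory Filter Set Topology Pointwise ENNReal

/-- Every weak Følner sequence in a locally compact second countable group
admits a tempered subsequence: a strictly monotone `n : ℕ → ℕ` and a finite `C > 0` with
`|⋃_{i<k} (F (n i))⁻¹ F (n k)| < C |F (n k)|` for every `k`. -/
theorem weak_folner_has_tempered_subsequence
    {G : Type*} [Group G] [TopologicalSpace G] [IsTopologicalGroup G]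
    [LocallyCompactSpace G] [SecondCountableTopology G]
    [MeasurableSpace G] [BorelSpace G]
    (μ : Measure G) [μ.IsHaarMeasure]
    (F : ℕ → Set G) (hFcomp : ∀ n, IsCompact (F n)) (hFpos : ∀ n, 0 < μ (F n))
    (hweak : ∀ K : Set G, IsCompact K →
      Tendsto (fun n => μ (symmDiff (F n) (K * F n)) / μ (F n)) atTop (𝓝 0)) :
    ∃ n : ℕ → ℕ, StrictMono n ∧ ∃ C : ℝ≥0∞, 0 < C ∧ C ≠ ⊤ ∧
      ∀ k : ℕ, μ (⋃ i, ⋃ _ : i < k, (F (n i))⁻¹ * F (n k)) < C * μ (F (n k)) := by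
  have hfin : ∀ N, μ (F N) ≠ ⊤ := fun N => ((hFcomp N).measure_lt_top).ne
  have key : ∀ m : ℕ, ∃ N, m < N ∧
      μ (symmDiff (F N) ((⋃ j ∈ Finset.range (m+1), (F j)⁻¹) * F N)) < μ (F N) := by
    intro m
    set K : Set G := ⋃ j ∈ Finset.range (m+1), (F j)⁻¹ with hK
    have hKc : IsCompact K :=
      (Finset.range (m+1)).finite_toSet.isCompact_biUnion (fun j _ => (hFcomp j).inv)
    have h1 : ∀ᶠ N in atTop, μ (symmDiff (F N) (K * F N)) / μ (F N) < 1 :=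
      (hweak K hKc).eventually_lt_const zero_lt_one
    obtain ⟨N, hN1, hN2⟩ := ((eventually_gt_atTop m).and h1).exists
    refine ⟨N, hN1, ?_⟩
    have := (ENNReal.div_lt_iff (Or.inl (hFpos N).ne') (Or.inl (hfin N))).1 hN2
    simpa using this
  choose φ hφgt hφ using key
  set n : ℕ → ℕ := fun k => Nat.rec 0 (fun _ m => φ m) k with hn
  have hsucc : ∀ k, n (k+1) = φ (n k) := fun k => rfl
  have hmono : StrictMono n := strictMono_nat_of_lt_succ fun k => by
    rw [hsucc]; exact hφgt (n k)
  refine ⟨n, hmono, 2, by norm_num, by norm_num, ?_⟩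
  intro k
  cases k with
  | zero =>
    simp only [Nat.not_lt_zero, iUnion_of_empty, iUnion_empty, measure_empty]
    exact ENNReal.mul_pos (by norm_num) (hFpos _).ne'
  | succ j =>
    set m := n j with hm
    set K : Set G := ⋃ t ∈ Finset.range (m+1), (F t)⁻¹ with hKdef
    have hsub : (⋃ i, ⋃ _ : i < j+1, (F (n i))⁻¹ * F (n (j+1))) ⊆ K * F (n (j+1)) := by
      intro x hx
      simp only [mem_iUnion] at hx
      obtain ⟨i, hi, hx⟩ := hx
      obtain ⟨a, ha, b, hb, rfl⟩ := hx
      refine ⟨a, ?_, b, hb, rfl⟩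
      have hni : n i ≤ m := hmono.monotone (Nat.lt_succ_iff.1 hi)
      exact mem_biUnion (Finset.mem_range.2 (Nat.lt_succ_of_le hni)) ha
    have hcover : K * F (n (j+1)) ⊆
        F (n (j+1)) ∪ symmDiff (F (n (j+1))) (K * F (n (j+1))) := by
      intro x hx
      by_cases h : x ∈ F (n (j+1))
      · exact Or.inl h
      · exact Or.inr (Or.inr ⟨hx, h⟩)
    have hΔ : μ (symmDiff (F (n (j+1))) (K * F (n (j+1)))) < μ (F (n (j+1))) := by
      rw [hsucc]; exact hφ m
    calc μ (⋃ i, ⋃ _ : i < j+1, (F (n i))⁻¹ * F (n (j+1)))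
        ≤ μ (K * F (n (j+1))) := measure_mono hsub
      _ ≤ μ (F (n (j+1))) + μ (symmDiff (F (n (j+1))) (K * F (n (j+1)))) :=
          le_trans (measure_mono hcover) (measure_union_le _ _)
      _ < μ (F (n (j+1))) + μ (F (n (j+1))) := ENNReal.add_lt_add_left (hfin _) hΔ
      _ = 2 * μ (F (n (j+1))) := (two_mul _).symm
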